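/- arXiv:2203.00673 — 3 statements merged into one kernel-verified Lean document; each statement's English description precedes it below -/
import Mathlib

section
/- If two worlds of many-logic modal structures (over the same base lattice L) are related by a bisimulation, then every modal formula receives the same value at both worlds: v_w(φ) = v_{w'}(φ). -/
/-- Down-interpretation of a value `a` of the base complete lattice `L` into
the (complete) sublattice `S`: the supremum of the elements of `S` below `a`. -/
def dInterp {L : Type*} [CompleteLattice L] (S : Set L) (a : L) : L :=
  sSup {x ∈ S | x ≤ a}

/-- Modal propositional formulas with conjunction, disjunction, negation, box. -/
inductive MForm : Type
  | var : ℕ → MForm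
  | neg : MForm → MForm
  | or : MForm → MForm → MForm
  | and : MForm → MForm → MForm
  | box : MForm → MForm

/-- A many-logic modal `L`-structure: each world carries a (complete)
sublattice of `L`, with accessibility relation `R` and an assignment `s` of
values (in the world's sublattice) to propositional variables.  The unary
operation `c` on `L` is the complement of the base lattice. -/
structure MLStructure (L : Type*) [CompleteLattice L] (c : L → L) where
  W : Type*
  lat : W → Set L
  R : W → W → Prop
  s : W → ℕ → L
  s_mem : ∀ w n, s w n ∈ lat w

/-- The valuation of formulas at worlds of a many-logic modal structure. -/
def MLStructure.val {L : Type*} [CompleteLattice L] {c : L → L}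
    (M : MLStructure L c) : MForm → M.W → L
  | .var n, w => M.s w n
  | .neg φ, w => dInterp (M.lat w) (c (M.val φ w))
  | .or φ ψ, w => dInterp (M.lat w) (M.val φ w ⊔ M.val ψ w)
  | .and φ ψ, w => dInterp (M.lat w) (M.val φ w ⊓ M.val ψ w)
  | .box φ, w => sInf {y | ∃ u, M.R w u ∧ y = dInterp (M.lat w) (M.val φ u)}

/-- Bisimulation between two many-logic modal structures over the same base
lattice: related worlds carry the same sublattice, agree on propositional
variables, and satisfy the zig and zag conditions. -/
def IsBisim {L : Type*} [CompleteLattice L] {c : L → L}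
    (M M' : MLStructure L c) (B : M.W → M'.W → Prop) : Prop :=
  ∀ w w', B w w' →
    M.lat w = M'.lat w' ∧
    (∀ n, M.s w n = M'.s w' n) ∧
    (∀ u, M.R w u → ∃ u', M'.R w' u' ∧ M.lat u = M'.lat u' ∧ B u u') ∧
    (∀ u', M'.R w' u' → ∃ u, M.R w u ∧ M.lat u = M'.lat u' ∧ B u u')

/-- bisimilar worlds of many-logic modal structures over a common
base lattice assign the same value to every modal formula. -/
theorem bisim_val_eq {L : Type*} [CompleteLattice L] {c : L → L}
    (M M' : MLStructure L c) (B : M.W → M'.W → Prop)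
    (hB : IsBisim M M' B) (w : M.W) (w' : M'.W) (hww' : B w w') :
    ∀ φ : MForm, M.val φ w = M'.val φ w' := by
  intro φ
  induction φ generalizing w w' with
  | var n => exact (hB w w' hww').2.1 n
  | neg φ ih =>
      simp only [MLStructure.val, (hB w w' hww').1, ih w w' hww']
  | or φ ψ ihφ ihψ =>
      simp only [MLStructure.val, (hB w w' hww').1, ihφ w w' hww', ihψ w w' hww']
  | and φ ψ ihφ ihψ =>
      simp only [MLStructure.val, (hB w w' hww').1, ihφ w w' hww', ihψ w w' hww']
  | box φ ih =>
      obtain ⟨hlat, -, hzig, hzag⟩ := hB w w' hww'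
      simp only [MLStructure.val]
      congr 1
      ext y
      constructor
      · rintro ⟨u, hRu, rfl⟩
        obtain ⟨u', hRu', hlu, hBu⟩ := hzig u hRu
        exact ⟨u', hRu', by rw [hlat, ih u u' hBu]⟩
      · rintro ⟨u', hRu', rfl⟩
        obtain ⟨u, hRu, hlu, hBu⟩ := hzag u' hRu'
        exact ⟨u, hRu, by rw [hlat, ih u u' hBu]⟩
end

section
/- There exists a many-logic modal structure over a three-element chain L = {0 < 1' < 1} with filter F = {1, 1'} in which a world w validates α and every world accessed by w validates α, yet w does not validate □α; specifically, with sublattice A = {0,1} at w, accessibility w R w and w R w', values v_w(α)=1 and v_{w'}(α)=1', one gets v_w(□α) = 0 ∉ F. -/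
lemma d1 : dInterp ({0, 2} : Set (Fin 3)) 2 = 2 := by
  unfold dInterp
  have : {x ∈ ({0,2} : Set (Fin 3)) | x ≤ 2} = {0, 2} := by
    ext x; simp; intro h; rcases h with h|h <;> subst h <;> decide
  rw [this, sSup_pair]; decide

lemma d2 : dInterp ({0, 2} : Set (Fin 3)) 1 = 0 := by
  unfold dInterp
  have : {x ∈ ({0,2} : Set (Fin 3)) | x ≤ 1} = {0} := by
    ext x
    constructor
    · rintro ⟨h|h, hle⟩
      · exact h
      · subst h; exact absurd hle (by decide)
    · rintro rfl; exact ⟨Or.inl rfl, by decide⟩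
  rw [this, sSup_singleton]

/-- over the three-element chain `Fin 3` (`0 < 1 < 2`, i.e.
`0 < 1' < 1`) with filter `F = {2, 1}` (`= {1, 1'}`), the world `w` carrying
the sublattice `A = {0, 2}` with `v_w(α) = 2` which accesses itself and a
world `w'` carrying the full chain with `v_{w'}(α) = 1` satisfies `α`, and so
does every accessed world, yet `v_w(□α) = dInterp A 2 ⊓ dInterp A 1 = 0 ∉ F`:
`w` does not validate `□α`. -/
theorem nec_fails_though_true_everywhere :
    (2 : Fin 3) ∈ ({2, 1} : Set (Fin 3)) ∧
    (1 : Fin 3) ∈ ({2, 1} : Set (Fin 3)) ∧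
    dInterp ({0, 2} : Set (Fin 3)) 2 ⊓ dInterp ({0, 2} : Set (Fin 3)) 1 = 0 ∧
    dInterp ({0, 2} : Set (Fin 3)) 2 ⊓ dInterp ({0, 2} : Set (Fin 3)) 1 ∉
      ({2, 1} : Set (Fin 3)) := by
  refine ⟨by simp, by simp, ?_, ?_⟩ <;> rw [d1, d2] <;> decide
end

section
/- In the many-logic structure over the four-element lattice of the Logic of Paradox LP (values {F} < {V,F}, {} < {V}, with {V,F} and {} incomparable, negation fixing {V,F} and {} and swapping {V},{F}), a world w carrying the sublattice CL = {{F},{V}} that accesses a world w' carrying LP with v_{w'}(α) = {V,F} satisfies v_w(□α) = {F}: even though both α and ¬α hold at w' (filter = designated values containing {V} and {V,F}), □α fails at w. -/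
open OrderDual

/-- The four-valued lattice of the Logic of Paradox under the truth ordering:
a pair `(v, f)` records membership of `V` and of `F`, with
`(v,f) ≤ (v',f')` iff `v → v'` and `f' → f`. -/
abbrev LPv : Type := Prop × Propᵒᵈ

/-- LP negation: swap the `V`- and `F`-components. -/
def lpneg (p : LPv) : LPv := (ofDual p.2, toDual p.1)

/-- The value `{V, F}`. -/
def vTF : LPv := (True, toDual True)
/-- The value `{F}`. -/
def vF : LPv := (False, toDual True)
/-- The value `{V}`. -/
def vV : LPv := (True, toDual False)

/-- Designated values of LP: `{V}` and `{V, F}`. -/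
def Des : Set LPv := {vV, vTF}

/-- a world `w` carrying the classical sublattice
`CL = {{F}, {V}}` accessing a world `w'` carrying full LP with
`v_{w'}(α) = {V,F}` has `v_w(□α) = {F}`: both `α` and `¬α` hold at `w'`,
yet `□α` fails at `w`. -/
theorem box_fails_from_paradoxical :
    vTF ∈ Des ∧ lpneg vTF ∈ Des ∧
    dInterp ({vF, vV} : Set LPv) vTF = vF ∧
    dInterp ({vF, vV} : Set LPv) vTF ∉ Des := by
  have hset : {x ∈ ({vF, vV} : Set LPv) | x ≤ vTF} = {vF} := by
    ext x
    simp only [Set.mem_setOf_eq, Set.mem_insert_iff, Set.mem_singleton_iff]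
    constructor
    · rintro ⟨h | h, hle⟩
      · exact h
      · exfalso
        subst h
        have := hle.2
        simp [vV, vTF, Prod.le_def, OrderDual.toDual_le_toDual] at this
    · rintro rfl
      refine ⟨Or.inl rfl, ?_⟩
      constructor
      · exact fun h => h.elim
      · exact le_refl _
  have hd : dInterp ({vF, vV} : Set LPv) vTF = vF := by
    rw [dInterp, hset, sSup_singleton]
  refine ⟨Or.inr rfl, ?_, hd, ?_⟩
  · have : lpneg vTF = vTF := rfl
    rw [this]; exact Or.inr rfl
  · rw [hd]
    intro h
    rcases h with h | h
    · have : vF.1 = vV.1 := by rw [h]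
      simp [vF, vV] at this
    · have : vF.1 = vTF.1 := by rw [h]
      simp [vF, vTF] at this
end
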